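/- Let ℓ_φ be an Orlicz sequence space with Luxemburg norm where φ is an Orlicz function with φ'(0) = 0 (right derivative at 0 is zero). Then ℓ_φ has property (Q): for all basis indices i ≠ j, lim_{ε→0⁺} (‖e_i + ε e_j‖_φ − 1)/ε = 0. -/

import Mathlib

open Filter

/-- The Luxemburg norm on sequences. -/
noncomputable def luxNormSeq (φ : ℝ → ℝ) (x : ℕ → ℝ) : ℝ :=
  sInf {l : ℝ | 0 < l ∧ ∑' n, φ (|x n| / l) ≤ 1}

/-- If the Orlicz function `φ` has right derivative `0` at `0`, then `ℓ_φ`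
with the Luxemburg norm has property (Q). -/
theorem stmt16 (φ : ℝ → ℝ) (hconv : ConvexOn ℝ (Set.Ici 0) φ)
    (hmono : MonotoneOn φ (Set.Ici 0)) (h0 : φ 0 = 0) (h1 : φ 1 = 1)
    (hder : HasDerivWithinAt φ 0 (Set.Ici (0 : ℝ)) 0) :
    ∀ i j : ℕ, i ≠ j →
      Tendsto (fun ε : ℝ =>
          (luxNormSeq φ (((Pi.single i 1 : ℕ → ℝ) + ε • (Pi.single j 1 : ℕ → ℝ))) - 1) / ε)
        (nhdsWithin 0 (Set.Ioi 0)) (nhds 0) := by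
  intro i j hij
  -- φ nonneg on [0,∞)
  have hφnn : ∀ t : ℝ, 0 ≤ t → 0 ≤ φ t := by
    intro t ht
    have := hmono (Set.mem_Ici.mpr le_rfl) (Set.mem_Ici.mpr ht) ht
    linarith [this, h0.le]
  -- φ t ≤ t on [0,1]
  have hφle : ∀ t : ℝ, 0 ≤ t → t ≤ 1 → φ t ≤ t := by
    intro t ht ht1
    have := hconv.2 (Set.mem_Ici.mpr (le_refl (0:ℝ))) (Set.mem_Ici.mpr (zero_le_one))
      (by linarith : (0:ℝ) ≤ 1 - t) ht (by ring)
    simp only [smul_eq_mul, mul_zero, mul_one, add_zero, zero_add] at this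
    rw [h0, h1] at this
    linarith
  -- φ t ≥ t for t ≥ 1
  have hφge : ∀ t : ℝ, 1 ≤ t → t ≤ φ t := by
    intro t ht
    rcases eq_or_lt_of_le ht with h | h
    · rw [← h, h1]
    have htpos : (0:ℝ) < t := by linarith
    have ha : (0:ℝ) ≤ 1 - 1/t := by
      rw [sub_nonneg, div_le_one htpos]; exact ht
    have hc := hconv.2 (Set.mem_Ici.mpr (le_refl (0:ℝ))) (Set.mem_Ici.mpr htpos.le)
      ha (by positivity : (0:ℝ) ≤ 1/t) (by ring)
    have ht' : (1 - 1/t) • (0:ℝ) + (1/t) • t = 1 := by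
      simp only [smul_eq_mul, mul_zero, zero_add]; exact one_div_mul_cancel htpos.ne'
    rw [ht', h1, h0] at hc
    simp only [smul_eq_mul, mul_zero, zero_add] at hc
    rw [div_mul_eq_mul_div, one_mul, le_div_iff₀ htpos] at hc
    linarith
  -- slope family tendsto
  have hslope : Tendsto (fun ε : ℝ => φ ε / ε) (nhdsWithin 0 (Set.Ioi 0)) (nhds 0) := by
    have h := hasDerivWithinAt_iff_tendsto_slope.mp hder
    have hs : Set.Ici (0:ℝ) \ {0} = Set.Ioi 0 := by
      ext x; simp [Set.mem_diff, Set.mem_Ici, Set.mem_Ioi, lt_iff_le_and_ne, eq_comm]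
    rw [hs] at h
    refine h.congr' ?_
    filter_upwards [self_mem_nhdsWithin] with x hx
    simp [slope_def_field, h0, div_eq_mul_inv]
  rw [Metric.tendsto_nhds]
  intro δ hδ
  have h4 : (0:ℝ) < δ/4 := by positivity
  have hev1 := Metric.tendsto_nhds.mp hslope (δ/4) h4
  have hev2 : ∀ᶠ ε : ℝ in nhdsWithin 0 (Set.Ioi 0), ε ∈ Set.Ioo 0 (min 1 (2/δ)) := by
    exact Ioo_mem_nhdsGT_of_mem ⟨le_refl 0, lt_min one_pos (by positivity)⟩
  filter_upwards [hev1, hev2, self_mem_nhdsWithin] with ε hε1 hε2 hεpos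
  have hεpos : (0:ℝ) < ε := hεpos
  have hεsmall : ε < 2/δ := lt_of_lt_of_le hε2.2 (min_le_right _ _)
  rw [Real.dist_eq, sub_zero] at hε1
  have hφε : φ ε < (δ/4) * ε := by
    have := (abs_lt.mp hε1).2
    rw [div_lt_iff₀ hεpos] at this
    linarith
  -- the tsum formula
  set x : ℕ → ℝ := (Pi.single i 1 : ℕ → ℝ) + ε • (Pi.single j 1 : ℕ → ℝ) with hxdef
  have hxi : x i = 1 := by
    simp [hxdef, Pi.single_eq_of_ne hij]
  have hxj : x j = ε := by
    simp [hxdef, Pi.single_eq_of_ne hij.symm]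
  have hx0 : ∀ n, n ≠ i → n ≠ j → x n = 0 := by
    intro n hni hnj
    simp [hxdef, Pi.single_eq_of_ne hni, Pi.single_eq_of_ne hnj]
  have htsum : ∀ l : ℝ, 0 < l → (∑' n, φ (|x n| / l)) = φ (1/l) + φ (ε/l) := by
    intro l hl
    rw [tsum_eq_sum (s := {i, j}) (by
      intro n hn
      simp only [Finset.mem_insert, Finset.mem_singleton, not_or] at hn
      rw [hx0 n hn.1 hn.2, abs_zero, zero_div, h0])]
    rw [Finset.sum_pair hij, hxi, hxj, abs_one, abs_of_pos hεpos]
  set S : Set ℝ := {l : ℝ | 0 < l ∧ ∑' n, φ (|x n| / l) ≤ 1} with hSdef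
  -- lower bound: every element of S is ≥ 1
  have hlb : ∀ l ∈ S, (1:ℝ) ≤ l := by
    intro l hl
    obtain ⟨hlpos, hsum⟩ := hl
    rw [htsum l hlpos] at hsum
    by_contra hc
    push_neg at hc
    have h1l : 1 < 1/l := by
      rw [lt_div_iff₀ hlpos]; linarith
    have := hφge (1/l) h1l.le
    have hεl : 0 ≤ φ (ε/l) := hφnn _ (by positivity)
    linarith
  -- the candidate λ
  set lam : ℝ := 1 + (δ/2) * ε with hlamdef
  clear_value lam
  have hlam1 : 1 < lam := by
    have : 0 < (δ/2) * ε := by positivity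
    linarith
  have hlampos : 0 < lam := by linarith
  have hlam2 : lam < 2 := by
    have : (δ/2) * ε < 1 := by
      rw [lt_div_iff₀ hδ] at hεsmall
      nlinarith
    linarith
  have hlammem : lam ∈ S := by
    refine ⟨hlampos, ?_⟩
    rw [htsum lam hlampos]
    have hA : φ (1/lam) ≤ 1/lam := hφle _ (by positivity) (by
      rw [div_le_one hlampos]; linarith)
    have hB : φ (ε/lam) ≤ φ ε := by
      apply hmono (Set.mem_Ici.mpr (by positivity)) (Set.mem_Ici.mpr hεpos.le)
      rw [div_le_iff₀ hlampos]
      nlinarith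
    have hkey : 1/lam + (δ/4) * ε ≤ 1 := by
      rw [div_add' _ _ _ hlampos.ne', div_le_one hlampos]
      nlinarith [mul_pos (mul_pos h4 hεpos) (by linarith : (0:ℝ) < 2 - lam)]
    linarith
  have hSne : S.Nonempty := ⟨lam, hlammem⟩
  have hSbdd : BddBelow S := ⟨1, fun l hl => hlb l hl⟩
  have hN1 : 1 ≤ luxNormSeq φ x := le_csInf hSne hlb
  have hNlam : luxNormSeq φ x ≤ lam := csInf_le hSbdd hlammem
  rw [Real.dist_eq, sub_zero, abs_of_nonneg (div_nonneg (by linarith) hεpos.le)]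
  rw [div_lt_iff₀ hεpos]
  have : luxNormSeq φ x - 1 ≤ (δ/2) * ε := by linarith
  nlinarith
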